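/- Let G be a group containing a free subgroup F of rank 2 freely generated by elements x and y, and suppose N ≤ G is a subgroup with x ∈ N, y ∉ N, y^n ∉ N for all n > 0, and y N y^{-1} ⊆ N. Then N ∩ F is a nontrivial subgroup of the free group F, is conjugated into itself by y with no positive power of y in N ∩ F, and hence N ∩ F is not finitely generated. -/

import Mathlib

open Subgroup

namespace Stmt19

/-- exponent sum in the `false` generator, multiplicatively. -/
def psi : FreeGroup Bool →* Multiplicative ℤ :=
  FreeGroup.lift (fun b => if b then 1 else Multiplicative.ofAdd 1)

@[simp] lemma psi_true : psi (FreeGroup.of true) = 1 := by simp [psi]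
@[simp] lemma psi_false : psi (FreeGroup.of false) = Multiplicative.ofAdd 1 := by simp [psi]

variable {G : Type*} [Group G]

/-- the subgroup generated by nonnegative `y`-conjugates of `x` -/
def P (x y : G) : Subgroup G := closure {g | ∃ n : ℕ, g = y ^ n * x * (y ^ n)⁻¹}

lemma mem_P (x y : G) (n : ℕ) : y ^ n * x * (y ^ n)⁻¹ ∈ P x y :=
  subset_closure ⟨n, rfl⟩

lemma mem_P_z (x y : G) (M : ℤ) (hM : 0 ≤ M) : y ^ M * x * (y ^ M)⁻¹ ∈ P x y := by
  lift M to ℕ using hM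
  rw [zpow_natCast]; exact mem_P x y M

lemma keyA (x y : G) (w : FreeGroup Bool) :
    ∃ M₀ : ℤ, ∀ M : ℤ, M₀ ≤ M →
      y ^ M * (FreeGroup.lift (fun b : Bool => if b then x else y)) w *
        (y ^ ((psi w).toAdd))⁻¹ * (y ^ M)⁻¹ ∈ P x y := by
  induction w using FreeGroup.induction_on with
  | C1 =>
    refine ⟨0, fun M _ => ?_⟩
    simpa using one_mem (P x y)
  | of b =>
    cases b with
    | true =>
      refine ⟨0, fun M hM => ?_⟩
      have h1 : (FreeGroup.lift (fun b : Bool => if b then x else y)) (FreeGroup.of true) = x := by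
        simp
      have h2 : ((psi (FreeGroup.of true)).toAdd) = (0 : ℤ) := by simp
      rw [h1, h2]
      simpa using mem_P_z x y M hM
    | false =>
      refine ⟨0, fun M _ => ?_⟩
      have h1 : (FreeGroup.lift (fun b : Bool => if b then x else y)) (FreeGroup.of false) = y := by
        simp
      have h2 : ((psi (FreeGroup.of false)).toAdd) = (1 : ℤ) := by simp
      rw [h1, h2]
      have : y ^ M * y * (y ^ (1:ℤ))⁻¹ * (y ^ M)⁻¹ = 1 := by group
      rw [this]; exact one_mem _
  | inv_of b _ =>
    cases b with
    | true =>
      refine ⟨0, fun M hM => ?_⟩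
      have h1 : (FreeGroup.lift (fun b : Bool => if b then x else y)) (FreeGroup.of true)⁻¹ = x⁻¹ := by
        simp
      have h2 : ((psi (FreeGroup.of true)⁻¹).toAdd) = (0 : ℤ) := by simp
      rw [h1, h2]
      have : y ^ M * x⁻¹ * (y ^ (0:ℤ))⁻¹ * (y ^ M)⁻¹ = (y ^ M * x * (y ^ M)⁻¹)⁻¹ := by group
      rw [this]
      exact inv_mem (mem_P_z x y M hM)
    | false =>
      refine ⟨0, fun M _ => ?_⟩
      have h1 : (FreeGroup.lift (fun b : Bool => if b then x else y)) (FreeGroup.of false)⁻¹ = y⁻¹ := by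
        simp
      have h2 : ((psi (FreeGroup.of false)⁻¹).toAdd) = (-1 : ℤ) := by simp
      rw [h1, h2]
      have : y ^ M * y⁻¹ * (y ^ (-1:ℤ))⁻¹ * (y ^ M)⁻¹ = 1 := by group
      rw [this]; exact one_mem _
  | mul u v hu hv =>
    obtain ⟨Mu, hMu⟩ := hu
    obtain ⟨Mv, hMv⟩ := hv
    refine ⟨max Mu (Mv - (psi u).toAdd), fun M hM => ?_⟩
    have hMu' : Mu ≤ M := le_trans (le_max_left _ _) hM
    have hMv' : Mv ≤ M + (psi u).toAdd := by
      have := le_trans (le_max_right _ _) hM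
      omega
    have hA := hMu M hMu'
    have hB := hMv (M + (psi u).toAdd) hMv'
    have key :
        y ^ M * (FreeGroup.lift (fun b : Bool => if b then x else y)) (u * v) *
          (y ^ ((psi (u * v)).toAdd))⁻¹ * (y ^ M)⁻¹ =
        (y ^ M * (FreeGroup.lift (fun b : Bool => if b then x else y)) u *
          (y ^ ((psi u).toAdd))⁻¹ * (y ^ M)⁻¹) *
        (y ^ (M + (psi u).toAdd) * (FreeGroup.lift (fun b : Bool => if b then x else y)) v *
          (y ^ ((psi v).toAdd))⁻¹ * (y ^ (M + (psi u).toAdd))⁻¹) := by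
      rw [map_mul, map_mul, toAdd_mul]
      group
    rw [key]
    exact mul_mem hA hB



variable {G : Type*} [Group G]

lemma conj_pow_mem (y : G) (N : Subgroup G) (hconj : ∀ g ∈ N, y * g * y⁻¹ ∈ N)
    (n : ℕ) {g : G} (hg : g ∈ N) : y ^ n * g * (y ^ n)⁻¹ ∈ N := by
  induction n with
  | zero => simpa using hg
  | succ k ih =>
    have := hconj _ ih
    have e : y * (y ^ k * g * (y ^ k)⁻¹) * y⁻¹ = y ^ (k+1) * g * (y ^ (k+1))⁻¹ := by
      rw [pow_succ']; group
    rwa [e] at this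

lemma P_le (x y : G) (N : Subgroup G) (hx : x ∈ N) (hconj : ∀ g ∈ N, y * g * y⁻¹ ∈ N) :
    closure {g | ∃ n : ℕ, g = y ^ n * x * (y ^ n)⁻¹} ≤ N := by
  rw [closure_le]
  rintro g ⟨n, rfl⟩
  exact conj_pow_mem y N hconj n hx

lemma psi_eq_one (x y : G) (N : Subgroup G)
    (hx : x ∈ N) (hy : ∀ n : ℕ, 0 < n → y ^ n ∉ N)
    (hconj : ∀ g ∈ N, y * g * y⁻¹ ∈ N)
    (w : FreeGroup Bool)
    (hw : (FreeGroup.lift (fun b : Bool => if b then x else y)) w ∈ N) :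
    psi w = 1 := by
  obtain ⟨M₀, hM⟩ := keyA x y w
  set d : ℤ := (psi w).toAdd with hd
  set M : ℤ := max M₀ 0 with hMdef
  have hM0 : (0:ℤ) ≤ M := le_max_right _ _
  have hp : y ^ M * (FreeGroup.lift (fun b : Bool => if b then x else y)) w *
      (y ^ d)⁻¹ * (y ^ M)⁻¹ ∈ N := by
    refine P_le x y N hx hconj ?_
    exact hM M (le_max_left _ _)
  -- also the plain conjugate is in N
  have hc : y ^ M * (FreeGroup.lift (fun b : Bool => if b then x else y)) w * (y ^ M)⁻¹ ∈ N := by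
    lift M to ℕ using hM0 with m
    rw [zpow_natCast]
    exact conj_pow_mem y N hconj m hw
  have hyd : y ^ d ∈ N := by
    have e : y ^ d =
        (y ^ M * (FreeGroup.lift (fun b : Bool => if b then x else y)) w *
          (y ^ d)⁻¹ * (y ^ M)⁻¹)⁻¹ *
        (y ^ M * (FreeGroup.lift (fun b : Bool => if b then x else y)) w * (y ^ M)⁻¹) := by
      group
    rw [e]
    exact mul_mem (inv_mem hp) hc
  -- conclude d = 0
  have hd0 : d = 0 := by
    by_contra h0
    rcases lt_or_gt_of_ne h0 with hneg | hpos
    · have : y ^ ((-d).toNat) ∈ N := by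
        have : (y ^ d)⁻¹ ∈ N := inv_mem hyd
        rwa [← zpow_neg, show (-d) = ((-d).toNat : ℤ) by omega, zpow_natCast] at this
      exact hy _ (by omega) this
    · have : y ^ (d.toNat) ∈ N := by
        rwa [show d = (d.toNat : ℤ) by omega, zpow_natCast] at hyd
      exact hy _ (by omega) this
  have : (psi w).toAdd = (0:ℤ) := hd0
  exact Multiplicative.toAdd.injective (by simpa using this)



def sig : MulAut (FreeGroup ℤ) := (FreeGroup.freeGroupCongr (Equiv.addRight (1:ℤ)))

lemma sig_of (k : ℤ) : sig (FreeGroup.of k) = FreeGroup.of (k + 1) := by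
  simp [sig, FreeGroup.freeGroupCongr_apply, FreeGroup.map.of]

def phiW : Multiplicative ℤ →* MulAut (FreeGroup ℤ) := zpowersHom _ sig

abbrev W := SemidirectProduct (FreeGroup ℤ) (Multiplicative ℤ) phiW

def Phi : FreeGroup Bool →* W :=
  FreeGroup.lift (fun b => if b then SemidirectProduct.inl (FreeGroup.of (0:ℤ))
    else SemidirectProduct.inr (Multiplicative.ofAdd 1))

lemma rightHom_Phi (w : FreeGroup Bool) :
    SemidirectProduct.rightHom (Phi w) = psi w := by
  have : (SemidirectProduct.rightHom.comp Phi : FreeGroup Bool →* Multiplicative ℤ) = psi := by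
    apply FreeGroup.ext_hom
    intro a
    cases a <;> simp [Phi, psi]
  exact DFunLike.congr_fun this w

lemma sig_pow_of' (n : ℕ) (k : ℤ) : (sig ^ n) (FreeGroup.of k) = FreeGroup.of (k + n) := by
  induction n generalizing k with
  | zero => simp
  | succ j ih =>
    rw [pow_succ, MulAut.mul_apply, sig_of, ih]
    congr 1
    omega

lemma sig_pow_of (n : ℕ) : (sig ^ n) (FreeGroup.of (0:ℤ)) = FreeGroup.of (n:ℤ) := by
  rw [sig_pow_of']
  congr 1
  omega

lemma Phi_bm (m : ℕ) :
    Phi ((FreeGroup.of false) ^ m * FreeGroup.of true * ((FreeGroup.of false) ^ m)⁻¹) =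
      SemidirectProduct.inl (FreeGroup.of (m:ℤ)) := by
  have h1 : Phi (FreeGroup.of false) = SemidirectProduct.inr (Multiplicative.ofAdd 1) := by
    simp [Phi]
  have h2 : Phi (FreeGroup.of true) = SemidirectProduct.inl (FreeGroup.of (0:ℤ)) := by
    simp [Phi]
  rw [map_mul, map_mul, map_inv, map_pow, h1, h2, ← map_pow, ← map_inv,
    ← SemidirectProduct.inl_aut]
  congr 1
  have : ((Multiplicative.ofAdd (1:ℤ)) ^ m) = Multiplicative.ofAdd (m:ℤ) := by
    simp [← ofAdd_nsmul]
  rw [this]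
  have : phiW (Multiplicative.ofAdd (m:ℤ)) = sig ^ (m:ℤ) := by
    simp [phiW]
  rw [this, zpow_natCast]
  exact sig_pow_of m

lemma supp_exists (z : FreeGroup ℤ) :
    ∃ S : Finset ℤ, z ∈ Subgroup.closure (FreeGroup.of '' ↑S) := by
  induction z using FreeGroup.induction_on with
  | C1 => exact ⟨∅, one_mem _⟩
  | of i => exact ⟨{i}, subset_closure ⟨i, by simp, rfl⟩⟩
  | inv_of i _ => exact ⟨{i}, inv_mem (subset_closure ⟨i, by simp, rfl⟩)⟩
  | mul u v hu hv =>
    obtain ⟨S₁, h₁⟩ := hu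
    obtain ⟨S₂, h₂⟩ := hv
    refine ⟨S₁ ∪ S₂, mul_mem ?_ ?_⟩
    · exact closure_mono (Set.image_mono (by exact_mod_cast Finset.subset_union_left)) h₁
    · exact closure_mono (Set.image_mono (by exact_mod_cast Finset.subset_union_right)) h₂

lemma of_not_mem_closure {S : Finset ℤ} {m : ℤ} (hm : m ∉ S) :
    FreeGroup.of m ∉ Subgroup.closure (FreeGroup.of '' ↑S) := by
  intro hmem
  classical
  set r : FreeGroup ℤ →* FreeGroup ℤ :=
    FreeGroup.lift (fun i => if i ∈ S then FreeGroup.of i else 1) with hr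
  have hfix : ∀ z ∈ Subgroup.closure (FreeGroup.of '' (↑S : Set ℤ)), r z = z := by
    intro z hz
    induction hz using closure_induction with
    | mem g hg =>
      obtain ⟨i, hi, rfl⟩ := hg
      simp only [Finset.mem_coe] at hi
      simp [hr, hi]
    | one => simp
    | mul a b _ _ ha hb => rw [map_mul, ha, hb]
    | inv a _ ha => rw [map_inv, ha]
  have h1 : r (FreeGroup.of m) = 1 := by simp [hr, hm]
  rw [hfix _ hmem] at h1
  exact FreeGroup.of_ne_one m h1

end Stmt19



/-- if `F = ⟨x, y⟩` is free of rank 2 on `x, y`, `N ≤ G` contains `x`,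
`y N y⁻¹ ⊆ N` and `y^n ∉ N` for all `n > 0`, then `N ∩ F` is nontrivial, conjugated
into itself by `y`, contains no positive power of `y`, and is not finitely
generated. -/
theorem stmt_19 {G : Type*} [Group G] (x y : G)
    (hfree : Function.Injective
      (FreeGroup.lift (fun b : Bool => if b then x else y) : FreeGroup Bool →* G))
    (N : Subgroup G) (hx : x ∈ N) (hyN : y ∉ N)
    (hy : ∀ n : ℕ, 0 < n → y ^ n ∉ N)
    (hconj : ∀ g ∈ N, y * g * y⁻¹ ∈ N) :
    N ⊓ (FreeGroup.lift (fun b : Bool => if b then x else y) : FreeGroup Bool →* G).range ≠ ⊥ ∧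
    (∀ g ∈ N ⊓ (FreeGroup.lift (fun b : Bool => if b then x else y) : FreeGroup Bool →* G).range,
      y * g * y⁻¹ ∈
        N ⊓ (FreeGroup.lift (fun b : Bool => if b then x else y) : FreeGroup Bool →* G).range) ∧
    (∀ n : ℕ, 0 < n → y ^ n ∉
      N ⊓ (FreeGroup.lift (fun b : Bool => if b then x else y) : FreeGroup Bool →* G).range) ∧
    ¬ (N ⊓ (FreeGroup.lift (fun b : Bool => if b then x else y) : FreeGroup Bool →* G).range).FG := by
  classical
  set f : FreeGroup Bool →* G := FreeGroup.lift (fun b : Bool => if b then x else y) with hf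
  have hfx : f (FreeGroup.of true) = x := by simp [hf]
  have hfy : f (FreeGroup.of false) = y := by simp [hf]
  have hxr : x ∈ f.range := ⟨FreeGroup.of true, hfx⟩
  have hyr : y ∈ f.range := ⟨FreeGroup.of false, hfy⟩
  refine ⟨?_, ?_, ?_, ?_⟩
  · -- nontrivial
    intro hbot
    have hxH : x ∈ N ⊓ f.range := ⟨hx, hxr⟩
    rw [hbot, Subgroup.mem_bot] at hxH
    have : f (FreeGroup.of true) = f 1 := by rw [hfx, map_one, hxH]
    exact FreeGroup.of_ne_one true (hfree this)
  · -- conjugation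
    intro g hg
    exact ⟨hconj g hg.1, mul_mem (mul_mem hyr hg.2) (f.range.inv_mem hyr)⟩
  · -- no positive powers of y
    intro n hn h
    exact hy n hn h.1
  · -- not finitely generated
    intro hFG
    obtain ⟨S, hScl, hSfin⟩ := (Subgroup.fg_iff _).mp hFG
    have hSH : S ⊆ ↑(N ⊓ f.range) := hScl ▸ Subgroup.subset_closure
    set T : Set (FreeGroup Bool) := f ⁻¹' S with hT
    have hTfin : T.Finite := hSfin.preimage hfree.injOn
    have hfT : f '' T = S :=
      Set.image_preimage_eq_of_subset (fun s hs => (hSH hs).2)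
    have hmapcl : Subgroup.map f (Subgroup.closure T) = N ⊓ f.range := by
      rw [MonoidHom.map_closure, hfT, hScl]
    have hpsiT : ∀ t ∈ T, Stmt19.psi t = 1 := by
      intro t ht
      exact Stmt19.psi_eq_one x y N hx hy hconj t (hSH ht).1
    choose suppF hsuppF using Stmt19.supp_exists
    set B : Finset ℤ := hTfin.toFinset.sup (fun t => suppF ((Stmt19.Phi t).left)) with hB
    have hsub : ∀ t ∈ T, (Stmt19.Phi t).left ∈ Subgroup.closure (FreeGroup.of '' ↑B) := by
      intro t ht
      refine Subgroup.closure_mono (Set.image_mono ?_) (hsuppF _)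
      exact_mod_cast Finset.le_sup (f := fun t => suppF ((Stmt19.Phi t).left))
        (hTfin.mem_toFinset.mpr ht)
    set m : ℕ := B.sup Int.toNat + 1 with hm
    have hmB : (m : ℤ) ∉ B := by
      intro hmem
      have h1 : (m:ℤ).toNat ≤ B.sup Int.toNat := Finset.le_sup (f := Int.toNat) hmem
      omega
    set bm : FreeGroup Bool :=
      (FreeGroup.of false) ^ m * FreeGroup.of true * ((FreeGroup.of false) ^ m)⁻¹ with hbm
    have hfbm : f bm = y ^ m * x * (y ^ m)⁻¹ := by
      rw [hbm, map_mul, map_mul, map_inv, map_pow, hfx, hfy]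
    have hbmN : f bm ∈ N ⊓ f.range :=
      ⟨hfbm ▸ Stmt19.conj_pow_mem y N hconj m hx, ⟨bm, rfl⟩⟩
    have hbmT : bm ∈ Subgroup.closure T := by
      have h1 : f bm ∈ Subgroup.map f (Subgroup.closure T) := hmapcl ▸ hbmN
      obtain ⟨w, hw, hfw⟩ := h1
      rwa [hfree hfw] at hw
    have hPhibm : Stmt19.Phi bm ∈
        Subgroup.map SemidirectProduct.inl (Subgroup.closure (FreeGroup.of '' ↑B)) := by
      have h1 : Stmt19.Phi bm ∈ Subgroup.map Stmt19.Phi (Subgroup.closure T) :=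
        ⟨bm, hbmT, rfl⟩
      rw [MonoidHom.map_closure] at h1
      refine (Subgroup.closure_le _).2 ?_ h1
      rintro g ⟨t, ht, rfl⟩
      have hinl : Stmt19.Phi t = SemidirectProduct.inl ((Stmt19.Phi t).left) := by
        refine SemidirectProduct.ext rfl ?_
        have h2 : SemidirectProduct.rightHom (Stmt19.Phi t) = 1 := by
          rw [Stmt19.rightHom_Phi, hpsiT t ht]
        simpa using h2
      rw [hinl]
      exact ⟨_, hsub t ht, rfl⟩
    rw [Stmt19.Phi_bm] at hPhibm
    obtain ⟨q, hq, hqe⟩ := hPhibm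
    have hq' : q = FreeGroup.of (m:ℤ) := SemidirectProduct.inl_injective hqe
    rw [hq'] at hq
    exact Stmt19.of_not_mem_closure hmB hq
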